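/- Let U ⊆ ℝ^n be open, let H : U → ℝ and d : U → ℝ^k be twice continuously differentiable, assume the Jacobian d'(x) ∈ ℝ^{k×n} has full row rank k for all x ∈ U, and that {x ∈ U : d(x) = 0} is nonempty. Define L := {(x, ∇H(x) + d'(x)ᵀλ) : x ∈ U, d(x) = 0, λ ∈ ℝ^k} ⊆ ℝ^n × ℝ^n. Then L satisfies the Lagrangian condition: for every z ∈ L and every (v₁,v₂) ∈ ℝ^n × ℝ^n, (v₁,v₂) ∈ T_z L if and only if v₁ᵀ w₂ − w₁ᵀ v₂ = 0 for all (w₁,w₂) ∈ T_z L. -/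

import Mathlib

open Matrix

/-- The gradient of `H : ℝ^n → ℝ`, given componentwise by the partial derivatives. -/
noncomputable def grad {n : ℕ} (H : (Fin n → ℝ) → ℝ) (x : Fin n → ℝ) : Fin n → ℝ :=
  fun i => fderiv ℝ H x (Pi.single i 1)

/-- The Jacobian matrix of `d : ℝ^n → ℝ^k`. -/
noncomputable def jac {n k : ℕ} (d : (Fin n → ℝ) → (Fin k → ℝ)) (x : Fin n → ℝ) :
    Matrix (Fin k) (Fin n) ℝ :=
  Matrix.of fun j i => fderiv ℝ d x (Pi.single i 1) j

/-- The tangent space of a set `S` at `z`: all velocities at `0` of continuously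
differentiable curves `(−1,1) → S` passing through `z` at time `0`. -/
def TangentSet {V : Type*} [NormedAddCommGroup V] [NormedSpace ℝ V]
    (S : Set V) (z : V) : Set V :=
  {v | ∃ x : ℝ → V, ContDiffOn ℝ 1 x (Set.Ioo (-1 : ℝ) 1) ∧
    (∀ t ∈ Set.Ioo (-1 : ℝ) 1, x t ∈ S) ∧ x 0 = z ∧
    derivWithin x (Set.Ioo (-1 : ℝ) 1) 0 = v}

section Aux

variable {X : Type*} [NormedAddCommGroup X] [NormedSpace ℝ X]

lemma pi_single_sum {n : ℕ} (u : Fin n → ℝ) :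
    (∑ i, u i • (Pi.single i 1 : Fin n → ℝ)) = u := by
  funext j
  simp [Pi.single_apply, Finset.sum_apply]

lemma mulVec_jac {n k : ℕ} (d : (Fin n → ℝ) → (Fin k → ℝ)) (x u : Fin n → ℝ) :
    jac d x *ᵥ u = fderiv ℝ d x u := by
  conv_rhs => rw [← pi_single_sum u]
  rw [map_sum]
  funext j
  simp only [Matrix.mulVec, dotProduct, jac, Matrix.of_apply, Finset.sum_apply]
  congr 1
  funext i
  rw [(fderiv ℝ d x).map_smul]
  simp [mul_comm]

lemma dot_grad {n : ℕ} (H : (Fin n → ℝ) → ℝ) (x u : Fin n → ℝ) :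
    grad H x ⬝ᵥ u = fderiv ℝ H x u := by
  conv_rhs => rw [← pi_single_sum u]
  rw [map_sum]
  simp only [dotProduct, grad, (fderiv ℝ H x).map_smul]
  simp [mul_comm]

lemma contDiffAt_det {m : ℕ} {M : X → Matrix (Fin m) (Fin m) ℝ} {x0 : X}
    (h : ∀ a b, ContDiffAt ℝ 1 (fun x => M x a b) x0) :
    ContDiffAt ℝ 1 (fun x => (M x).det) x0 := by
  simp only [Matrix.det_apply']
  apply ContDiffAt.sum
  intro σ _
  exact (contDiffAt_const).mul (contDiffAt_prod fun i _ => h _ _)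

lemma contDiffAt_adjugate {m : ℕ} {M : X → Matrix (Fin m) (Fin m) ℝ} {x0 : X}
    (h : ∀ a b, ContDiffAt ℝ 1 (fun x => M x a b) x0) (a b : Fin m) :
    ContDiffAt ℝ 1 (fun x => (M x).adjugate a b) x0 := by
  simp only [Matrix.adjugate_apply]
  apply contDiffAt_det
  intro i j
  simp only [Matrix.updateRow_apply]
  by_cases hib : i = b <;> simp only [hib, if_pos, if_neg, ite_true, ite_false]
  · exact contDiffAt_const
  · exact h i j

lemma contDiffAt_inv_entry {m : ℕ} {M : X → Matrix (Fin m) (Fin m) ℝ} {x0 : X}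
    (h : ∀ a b, ContDiffAt ℝ 1 (fun x => M x a b) x0)
    (hdet : (M x0).det ≠ 0) (a b : Fin m) :
    ContDiffAt ℝ 1 (fun x => (M x)⁻¹ a b) x0 := by
  simp only [Matrix.inv_def, Ring.inverse_eq_inv', Matrix.smul_apply, smul_eq_mul]
  exact ((contDiffAt_inv ℝ hdet).comp x0 (contDiffAt_det h)).mul (contDiffAt_adjugate h a b)

lemma mem_tangentSet_of_small {V : Type*} [NormedAddCommGroup V] [NormedSpace ℝ V]
    {S : Set V} {z v : V} {δ : ℝ} (hδ : 0 < δ) (γ : ℝ → V)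
    (hC : ContDiffOn ℝ 1 γ (Set.Ioo (-δ) δ))
    (hS : ∀ t ∈ Set.Ioo (-δ) δ, γ t ∈ S) (h0 : γ 0 = z) (hv : HasDerivAt γ v 0) :
    v ∈ TangentSet S z := by
  set φ : ℝ → ℝ := fun t => δ ^ 2 * t / (δ ^ 2 + t ^ 2) with hφ
  have hden : ∀ t : ℝ, δ ^ 2 + t ^ 2 ≠ 0 := fun t => by positivity
  have hφmem : ∀ t : ℝ, φ t ∈ Set.Ioo (-δ) δ := by
    intro t
    constructor
    · rw [neg_lt, ← neg_div, ← neg_mul]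
      rw [div_lt_iff₀ (by positivity)]
      nlinarith [sq_nonneg (2*t + δ), hδ, mul_pos hδ (mul_pos hδ hδ)]
    · rw [div_lt_iff₀ (by positivity)]
      nlinarith [sq_nonneg (2*t - δ), hδ, mul_pos hδ (mul_pos hδ hδ)]
  have hφC : ContDiff ℝ 1 φ :=
    (contDiff_const.mul contDiff_id).div
      (contDiff_const.add (contDiff_id.pow 2)) hden
  have hφ0 : φ 0 = 0 := by simp [hφ]
  have hφ' : HasDerivAt φ 1 0 := by
    have h1 : HasDerivAt (fun t : ℝ => δ ^ 2 * t) (δ ^ 2) 0 := by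
      simpa using (hasDerivAt_id (0:ℝ)).const_mul (δ ^ 2)
    have h2 : HasDerivAt (fun t : ℝ => δ ^ 2 + t ^ 2) 0 0 := by
      have := ((hasDerivAt_pow 2 (0:ℝ)).const_add (δ ^ 2))
      simpa using this
    have := h1.fun_div h2 (hden 0)
    rw [show ((δ ^ 2 * (δ ^ 2 + 0 ^ 2) - δ ^ 2 * 0 * 0) / (δ ^ 2 + 0 ^ 2) ^ 2 : ℝ) = 1 by
      rw [div_eq_iff (pow_ne_zero 2 (hden 0))]
      ring] at this
    exact this
  refine ⟨γ ∘ φ, ?_, ?_, ?_, ?_⟩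
  · exact hC.comp (hφC.contDiffOn) fun t _ => hφmem t
  · exact fun t _ => hS _ (hφmem _)
  · simp [Function.comp, hφ0, h0]
  · rw [derivWithin_of_isOpen isOpen_Ioo (by norm_num)]
    have hvφ : HasDerivAt γ v (φ 0) := by rw [hφ0]; exact hv
    have : HasDerivAt (γ ∘ φ) ((1:ℝ) • v) 0 := hvφ.scomp 0 hφ'
    simpa using this.deriv

lemma isUnit_mul_transpose {k n : ℕ} (D : Matrix (Fin k) (Fin n) ℝ) (h : D.rank = k) :
    IsUnit (D * Dᵀ) := by
  rw [← Matrix.mulVec_injective_iff_isUnit]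
  have hrk : (D * Dᵀ).rank = k := by rw [Matrix.rank_self_mul_transpose, h]
  have hker : LinearMap.ker (D * Dᵀ).mulVecLin = ⊥ := by
    have hrn := (D * Dᵀ).mulVecLin.finrank_range_add_finrank_ker
    rw [Matrix.rank] at hrk
    have hfin : Module.finrank ℝ (Fin k → ℝ) = k := Module.finrank_fin_fun ℝ
    rw [hfin, hrk] at hrn
    exact Submodule.finrank_eq_zero.mp (by omega)
  intro a b hab
  have : (D * Dᵀ).mulVecLin a = (D * Dᵀ).mulVecLin b := hab
  exact (LinearMap.ker_eq_bot.mp hker) this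

lemma det_mul_transpose_isUnit {k n : ℕ} (D : Matrix (Fin k) (Fin n) ℝ) (h : D.rank = k) :
    IsUnit (D * Dᵀ).det := by
  have := isUnit_mul_transpose D h
  rwa [Matrix.isUnit_iff_isUnit_det] at this

lemma exists_mem_range_transpose {k n : ℕ} (D : Matrix (Fin k) (Fin n) ℝ) (h : D.rank = k)
    (w : Fin n → ℝ) (hw : ∀ u, D *ᵥ u = 0 → u ⬝ᵥ w = 0) : ∃ μ, w = Dᵀ *ᵥ μ := by
  have hdet := det_mul_transpose_isUnit D h
  set μ := (D * Dᵀ)⁻¹ *ᵥ (D *ᵥ w) with hμ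
  refine ⟨μ, ?_⟩
  set u := w - Dᵀ *ᵥ μ with hu
  have hDu : D *ᵥ u = 0 := by
    rw [hu, Matrix.mulVec_sub, Matrix.mulVec_mulVec, hμ, Matrix.mulVec_mulVec,
      Matrix.mul_nonsing_inv _ hdet, Matrix.one_mulVec, sub_self]
  have h1 : u ⬝ᵥ w = 0 := hw u hDu
  have h2 : u ⬝ᵥ (Dᵀ *ᵥ μ) = 0 := by
    rw [Matrix.dotProduct_mulVec, Matrix.vecMul_transpose, hDu]
    simp
  have : u ⬝ᵥ u = 0 := by
    have : u ⬝ᵥ u = u ⬝ᵥ w - u ⬝ᵥ (Dᵀ *ᵥ μ) := by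
      rw [hu]; rw [dotProduct_sub]
    rw [this, h1, h2, sub_zero]
  have hu0 : u = 0 := by
    rwa [dotProduct_self_eq_zero] at this
  rw [hu] at hu0
  exact sub_eq_zero.mp hu0
  

lemma grad_contDiffOn {n : ℕ} {U : Set (Fin n → ℝ)} (hU : IsOpen U)
    {H : (Fin n → ℝ) → ℝ} (hH : ContDiffOn ℝ 2 H U) :
    ContDiffOn ℝ 1 (grad H) U := by
  have h1 : ContDiffOn ℝ 1 (fun x => fderiv ℝ H x) U :=
    hH.fderiv_of_isOpen hU (by norm_num)
  rw [contDiffOn_pi]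
  intro i
  exact h1.clm_apply contDiffOn_const

lemma jac_entry_contDiffOn {n k : ℕ} {U : Set (Fin n → ℝ)} (hU : IsOpen U)
    {d : (Fin n → ℝ) → (Fin k → ℝ)} (hd : ContDiffOn ℝ 2 d U) (j : Fin k) (i : Fin n) :
    ContDiffOn ℝ 1 (fun x => jac d x j i) U := by
  have h1 : ContDiffOn ℝ 1 (fun x => fderiv ℝ d x) U :=
    hd.fderiv_of_isOpen hU (by norm_num)
  have h2 : ContDiffOn ℝ 1 (fun x => fderiv ℝ d x (Pi.single i 1)) U :=
    h1.clm_apply contDiffOn_const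
  simp only [jac, Matrix.of_apply]
  exact (contDiffOn_pi.mp h2) j

lemma hasFDerivAt_dot {n k : ℕ} {d : (Fin n → ℝ) → (Fin k → ℝ)} {x : Fin n → ℝ}
    (hx : DifferentiableAt ℝ d x) (lam : Fin k → ℝ) :
    HasFDerivAt (fun y => lam ⬝ᵥ d y)
      ((∑ j, lam j • (ContinuousLinearMap.proj j : (Fin k → ℝ) →L[ℝ] ℝ)).comp
        (fderiv ℝ d x)) x := by
  set c : (Fin k → ℝ) →L[ℝ] ℝ := ∑ j, lam j • ContinuousLinearMap.proj j with hc
  have hcq : ∀ q, c q = lam ⬝ᵥ q := by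
    intro q
    simp [hc, dotProduct, ContinuousLinearMap.sum_apply]
  have h1 : HasFDerivAt (fun y => c (d y)) (c.comp (fderiv ℝ d x)) x :=
    c.hasFDerivAt.comp x hx.hasFDerivAt
  have h2 : (fun y => lam ⬝ᵥ d y) = fun y => c (d y) := by
    funext y; rw [hcq]
  rw [h2]
  exact h1

lemma fderiv_dot_apply {n k : ℕ} {d : (Fin n → ℝ) → (Fin k → ℝ)} {x : Fin n → ℝ}
    (hx : DifferentiableAt ℝ d x) (lam : Fin k → ℝ) (w : Fin n → ℝ) :
    fderiv ℝ (fun y => lam ⬝ᵥ d y) x w = lam ⬝ᵥ fderiv ℝ d x w := by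
  rw [(hasFDerivAt_dot hx lam).fderiv]
  simp [dotProduct, ContinuousLinearMap.sum_apply]

lemma grad_add_dot {n k : ℕ} {U : Set (Fin n → ℝ)} (hU : IsOpen U)
    {H : (Fin n → ℝ) → ℝ} {d : (Fin n → ℝ) → (Fin k → ℝ)}
    (hH : ContDiffOn ℝ 2 H U) (hd : ContDiffOn ℝ 2 d U)
    (lam : Fin k → ℝ) {x : Fin n → ℝ} (hx : x ∈ U) :
    grad (fun y => H y + lam ⬝ᵥ d y) x = grad H x + (jac d x)ᵀ *ᵥ lam := by
  have hHd : DifferentiableAt ℝ H x :=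
    (hH.contDiffAt (hU.mem_nhds hx)).differentiableAt two_ne_zero
  have hdd : DifferentiableAt ℝ d x :=
    (hd.contDiffAt (hU.mem_nhds hx)).differentiableAt two_ne_zero
  have hld : DifferentiableAt ℝ (fun y => lam ⬝ᵥ d y) x :=
    (hasFDerivAt_dot hdd lam).differentiableAt
  funext i
  simp only [grad, Pi.add_apply]
  rw [fderiv_fun_add hHd hld, ContinuousLinearMap.add_apply, fderiv_dot_apply hdd lam]
  congr 1
  simp [jac, Matrix.mulVec, Matrix.transpose_apply, dotProduct, mul_comm]

lemma dot_fderiv_grad {n : ℕ} {U : Set (Fin n → ℝ)} (hU : IsOpen U)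
    {K : (Fin n → ℝ) → ℝ} (hK : ContDiffOn ℝ 2 K U) {x0 : Fin n → ℝ} (hx0 : x0 ∈ U)
    (a b : Fin n → ℝ) :
    a ⬝ᵥ fderiv ℝ (grad K) x0 b = fderiv ℝ (fderiv ℝ K) x0 b a := by
  have hdiff : DifferentiableAt ℝ (fderiv ℝ K) x0 :=
    ((hK.fderiv_of_isOpen (m := 1) hU (by norm_num)).contDiffAt (hU.mem_nhds hx0)).differentiableAt one_ne_zero
  have hcomp : ∀ i : Fin n, DifferentiableAt ℝ (fun x => fderiv ℝ K x (Pi.single i 1)) x0 :=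
    fun i => hdiff.clm_apply (differentiableAt_const _)
  have hgrad : grad K = fun x => (fun i => fderiv ℝ K x (Pi.single i 1)) := rfl
  rw [hgrad, fderiv_pi hcomp]
  simp only [dotProduct, ContinuousLinearMap.pi_apply]
  have hfi : ∀ i : Fin n, fderiv ℝ (fun x => fderiv ℝ K x (Pi.single i 1)) x0 b
      = fderiv ℝ (fderiv ℝ K) x0 b (Pi.single i 1) := by
    intro i
    rw [fderiv_clm_apply hdiff (differentiableAt_const _)]
    simp
  calc (∑ i, a i * fderiv ℝ (fun x => fderiv ℝ K x (Pi.single i 1)) x0 b)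
      = ∑ i, a i * fderiv ℝ (fderiv ℝ K) x0 b (Pi.single i 1) := by
        simp_rw [hfi]
    _ = fderiv ℝ (fderiv ℝ K) x0 b (∑ i, a i • (Pi.single i 1 : Fin n → ℝ)) := by
        rw [map_sum]
        congr 1
        funext i
        rw [(fderiv ℝ (fderiv ℝ K) x0 b).map_smul]
        simp [mul_comm]
    _ = fderiv ℝ (fderiv ℝ K) x0 b a := by rw [pi_single_sum]

lemma grad_fderiv_symm {n : ℕ} {U : Set (Fin n → ℝ)} (hU : IsOpen U)
    {K : (Fin n → ℝ) → ℝ} (hK : ContDiffOn ℝ 2 K U) {x0 : Fin n → ℝ} (hx0 : x0 ∈ U)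
    (u w : Fin n → ℝ) :
    u ⬝ᵥ fderiv ℝ (grad K) x0 w = w ⬝ᵥ fderiv ℝ (grad K) x0 u := by
  rw [dot_fderiv_grad hU hK hx0, dot_fderiv_grad hU hK hx0]
  exact ((hK.contDiffAt (hU.mem_nhds hx0)).isSymmSndFDerivAt (by norm_num)) w u

end Aux

lemma step2 {n k : ℕ} {U : Set (Fin n → ℝ)} (hU : IsOpen U)
    {H : (Fin n → ℝ) → ℝ} {d : (Fin n → ℝ) → (Fin k → ℝ)}
    (hH : ContDiffOn ℝ 2 H U) (hd : ContDiffOn ℝ 2 d U)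
    (hrank : ∀ x ∈ U, (jac d x).rank = k)
    {x0 : Fin n → ℝ} (hx0U : x0 ∈ U) (hdx0 : d x0 = 0) (lam0 : Fin k → ℝ)
    (u : Fin n → ℝ) (μ : Fin k → ℝ) (hu : jac d x0 *ᵥ u = 0) :
    (u, fderiv ℝ (grad (fun y => H y + lam0 ⬝ᵥ d y)) x0 u + (jac d x0)ᵀ *ᵥ μ) ∈
      TangentSet {p | ∃ x lam, x ∈ U ∧ d x = 0 ∧ p = (x, grad H x + (jac d x)ᵀ *ᵥ lam)}
        (x0, grad H x0 + (jac d x0)ᵀ *ᵥ lam0) := by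
  classical
  set D := jac d x0 with hD
  set G := D * Dᵀ with hG
  have hGunit : IsUnit G := isUnit_mul_transpose D (hrank x0 hx0U)
  have hGinj : Function.Injective G.mulVec := Matrix.mulVec_injective_iff_isUnit.mpr hGunit
  have hdd : DifferentiableAt ℝ d x0 :=
    (hd.contDiffAt (hU.mem_nhds hx0U)).differentiableAt two_ne_zero
  -- the auxiliary map ψ and its derivative
  set gL : (ℝ × (Fin k → ℝ)) →L[ℝ] (Fin n → ℝ) :=
    ((ContinuousLinearMap.fst ℝ ℝ (Fin k → ℝ)).smulRight u) +
      (LinearMap.toContinuousLinearMap (Matrix.mulVecLin Dᵀ)).comp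
        (ContinuousLinearMap.snd ℝ ℝ (Fin k → ℝ)) with hgL
  have hgLapp : ∀ q : ℝ × (Fin k → ℝ), gL q = q.1 • u + Dᵀ *ᵥ q.2 := by
    intro q; simp [hgL, ← Matrix.mulVec_transpose]
  set g : (ℝ × (Fin k → ℝ)) → (Fin n → ℝ) := fun q => x0 + gL q with hg
  have hgC : ContDiff ℝ 2 g := contDiff_const.add gL.contDiff
  have hg00 : g (0, 0) = x0 := by simp [hg, hgLapp]
  have hgF : ∀ q, HasFDerivAt g gL q := fun q => (gL.hasFDerivAt).const_add x0
  set ψ : (ℝ × (Fin k → ℝ)) → (ℝ × (Fin k → ℝ)) := fun q => (q.1, d (g q)) with hψ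
  have hψC : ContDiffAt ℝ 1 ψ (0, 0) := by
    apply ContDiffAt.prodMk
    · exact contDiffAt_fst
    · exact ((hd.contDiffAt (hU.mem_nhds (hg00 ▸ hx0U))).of_le one_le_two).comp _
        (hgC.contDiffAt.of_le one_le_two)
  -- the linear equivalence which is the derivative of ψ at the origin
  have hGbij : Function.Bijective G.mulVecLin := by
    have hinj : Function.Injective G.mulVecLin := hGinj
    exact ⟨hinj, (LinearMap.injective_iff_surjective).mp hinj⟩
  set e₂ : (Fin k → ℝ) ≃L[ℝ] (Fin k → ℝ) :=
    (LinearEquiv.ofBijective G.mulVecLin hGbij).toContinuousLinearEquiv with he₂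
  set ψ' : (ℝ × (Fin k → ℝ)) ≃L[ℝ] (ℝ × (Fin k → ℝ)) :=
    (ContinuousLinearEquiv.refl ℝ ℝ).prodCongr e₂ with hψ'def
  have he₂app : ∀ c, e₂ c = G *ᵥ c := fun c => rfl
  have hψ'app : ∀ q : ℝ × (Fin k → ℝ), (ψ' : (ℝ × (Fin k → ℝ)) →L[ℝ] (ℝ × (Fin k → ℝ))) q
      = (q.1, G *ᵥ q.2) := by
    intro q
    rfl
  have hψ' : HasFDerivAt ψ ((ψ' : (ℝ × (Fin k → ℝ)) ≃L[ℝ] (ℝ × (Fin k → ℝ))) :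
      (ℝ × (Fin k → ℝ)) →L[ℝ] (ℝ × (Fin k → ℝ))) (0, 0) := by
    have h1 : HasFDerivAt (fun q : ℝ × (Fin k → ℝ) => q.1)
        (ContinuousLinearMap.fst ℝ ℝ (Fin k → ℝ)) (0, 0) := hasFDerivAt_fst
    have h2 : HasFDerivAt (fun q => d (g q)) ((fderiv ℝ d x0).comp gL) (0, 0) := by
      have hdd' : HasFDerivAt d (fderiv ℝ d x0) (g (0, 0)) := hg00.symm ▸ hdd.hasFDerivAt
      exact hdd'.comp (0, (0 : Fin k → ℝ)) (hgF (0, 0))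
    have h3 := h1.prodMk h2
    refine h3.congr_fderiv ?_
    apply ContinuousLinearMap.ext
    intro q
    rw [hψ'app]
    have : fderiv ℝ d x0 (gL q) = q.1 • (D *ᵥ u) + G *ᵥ q.2 := by
      rw [← mulVec_jac, ← hD, hgLapp, Matrix.mulVec_add]
      congr 1
      · rw [Matrix.mulVec_smul]
      · rw [Matrix.mulVec_mulVec]
    simp only [ContinuousLinearMap.prod_apply, ContinuousLinearMap.coe_fst',
      ContinuousLinearMap.coe_comp', Function.comp_apply, this, hu]
    simp
  -- the local inverse
  have hg00' : g 0 = x0 := hg00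
  have hψ00 : ψ (0, 0) = (0, 0) := by
    simp [hψ, hg00', hg00, hdx0]
  set inv := hψC.localInverse hψ' one_ne_zero with hinv
  have hinvC : ContDiffAt ℝ 1 inv (0, 0) := by
    have := hψC.to_localInverse (f' := ψ') hψ' one_ne_zero
    rwa [hψ00] at this
  have hinv00 : inv (0, 0) = (0, 0) := by
    have := hψC.localInverse_apply_image (f' := ψ') hψ' one_ne_zero
    rwa [hψ00] at this
  have hev : ∀ᶠ q in nhds (0, 0), ψ (inv q) = q := by
    have := (hψC.hasStrictFDerivAt' hψ' one_ne_zero).eventually_right_inverse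
    rwa [hψ00] at this
  -- compose with t ↦ (t, 0)
  have hpm : ContDiffAt ℝ 1 (fun t : ℝ => ((t, 0) : ℝ × (Fin k → ℝ))) 0 :=
    (contDiff_id.prodMk contDiff_const).contDiffAt
  set iv : ℝ → (ℝ × (Fin k → ℝ)) := fun t => inv (t, 0) with hiv
  have hivC : ContDiffAt ℝ 1 iv 0 :=
    ContDiffAt.comp (x := (0:ℝ)) (g := inv) (f := fun t : ℝ => ((t, 0) : ℝ × (Fin k → ℝ)))
      hinvC hpm
  have htend : Filter.Tendsto (fun t : ℝ => ((t, 0) : ℝ × (Fin k → ℝ))) (nhds 0)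
      (nhds ((0 : ℝ), (0 : Fin k → ℝ))) := by
    have : Continuous (fun t : ℝ => ((t, 0) : ℝ × (Fin k → ℝ))) :=
      continuous_id.prodMk continuous_const
    simpa using this.tendsto 0
  set y : ℝ → (Fin n → ℝ) := fun t => g (iv t) with hy
  have hyC : ContDiffAt ℝ 1 y 0 :=
    ContDiffAt.comp (x := (0:ℝ)) (g := g) (f := iv)
      (by rw [show iv 0 = (0, 0) from hinv00]; exact hgC.contDiffAt.of_le one_le_two) hivC
  have hiv0 : iv 0 = (0, 0) := hinv00
  have hy0 : y 0 = x0 := by rw [hy]; simp only [hiv0]; exact hg00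
  have hevt : ∀ᶠ t in nhds (0 : ℝ), ψ (iv t) = (t, 0) := htend.eventually hev
  have hevd : ∀ᶠ t in nhds (0 : ℝ), d (y t) = 0 := by
    filter_upwards [hevt] with t ht
    have := congrArg Prod.snd ht
    simpa [hψ, hy] using this
  have hevU : ∀ᶠ t in nhds (0 : ℝ), y t ∈ U :=
    hyC.continuousAt.preimage_mem_nhds (hy0 ▸ hU.mem_nhds (hy0 ▸ hx0U))
  -- velocity of y
  set c : ℝ → (Fin k → ℝ) := fun t => (iv t).2 with hc
  have hcC : ContDiffAt ℝ 1 c 0 :=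
    ContDiffAt.comp (x := (0:ℝ)) (g := Prod.snd) (f := iv) contDiffAt_snd hivC
  have hcd : HasDerivAt c (deriv c 0) 0 := (hcC.differentiableAt one_ne_zero).hasDerivAt
  have hevy : ∀ᶠ t in nhds (0 : ℝ), y t = x0 + t • u + Dᵀ *ᵥ c t := by
    filter_upwards [hevt] with t ht
    have h1 : (iv t).1 = t := by
      have := congrArg Prod.fst ht
      simpa [hψ] using this
    simp only [hy, hg, hgLapp, h1, hc]
    rw [← add_assoc]
  have hw : HasDerivAt (fun t => x0 + t • u + Dᵀ *ᵥ c t) (u + Dᵀ *ᵥ deriv c 0) 0 := by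
    have h1 : HasDerivAt (fun t : ℝ => x0 + t • u) u 0 := by
      have := ((hasDerivAt_id (0 : ℝ)).smul_const u).const_add x0
      simpa using this
    have h2 : HasDerivAt (fun t => Dᵀ *ᵥ c t) (Dᵀ *ᵥ deriv c 0) 0 := by
      rw [hasDerivAt_pi]
      intro i
      have hder : ∀ j : Fin k, HasDerivAt (fun t => c t j) (deriv c 0 j) 0 :=
        fun j => hasDerivAt_pi.mp hcd j
      have hsum := HasDerivAt.fun_sum (A := fun j t => Dᵀ i j * c t j)
        (A' := fun j => Dᵀ i j * deriv c 0 j) (u := Finset.univ) (x := (0:ℝ))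
        (fun j _ => (hder j).const_mul (Dᵀ i j))
      exact hsum
    exact h1.add h2
  have hyd : HasDerivAt y (u + Dᵀ *ᵥ deriv c 0) 0 := hw.congr_of_eventuallyEq hevy
  have hDyd : D *ᵥ (u + Dᵀ *ᵥ deriv c 0) = 0 := by
    have hcomp : HasDerivAt (fun t => d (y t)) (fderiv ℝ d x0 (u + Dᵀ *ᵥ deriv c 0)) 0 := by
      have hdd' : HasFDerivAt d (fderiv ℝ d x0) (y 0) := hy0.symm ▸ hdd.hasFDerivAt
      exact hdd'.comp_hasDerivAt 0 hyd
    have hzero : HasDerivAt (fun t => d (y t)) 0 0 := by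
      have hconst : HasDerivAt (fun _ : ℝ => (0 : Fin k → ℝ)) 0 0 := hasDerivAt_const 0 0
      apply hconst.congr_of_eventuallyEq
      filter_upwards [hevd] with t ht using ht
    have := hzero.unique hcomp
    rw [← mulVec_jac, ← hD] at this
    exact this.symm
  have hc0 : deriv c 0 = 0 := by
    apply hGinj
    rw [Matrix.mulVec_add, hu, zero_add, Matrix.mulVec_mulVec] at hDyd
    rw [hG]
    simpa using hDyd
  have hydu : HasDerivAt y u 0 := by
    rw [hc0] at hyd
    simpa using hyd
  -- the momentum curve
  set K : (Fin n → ℝ) → ℝ := fun z => H z + lam0 ⬝ᵥ d z with hK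
  have hKC2 : ContDiffOn ℝ 2 K U := by
    apply hH.add
    have hcq : (fun z => lam0 ⬝ᵥ d z) = fun z =>
        (∑ j, lam0 j • (ContinuousLinearMap.proj j : (Fin k → ℝ) →L[ℝ] ℝ)) (d z) := by
      funext z
      simp [dotProduct, ContinuousLinearMap.sum_apply]
    rw [hcq]
    exact (∑ j, lam0 j •
      (ContinuousLinearMap.proj j : (Fin k → ℝ) →L[ℝ] ℝ)).contDiff.comp_contDiffOn hd
  have hgradKC : ContDiffOn ℝ 1 (grad K) U := grad_contDiffOn hU hKC2
  have hgradK_diff : DifferentiableAt ℝ (grad K) x0 :=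
    (hgradKC.contDiffAt (hU.mem_nhds hx0U)).differentiableAt one_ne_zero
  set p : ℝ → (Fin n → ℝ) := fun t => grad H (y t) + (jac d (y t))ᵀ *ᵥ (lam0 + t • μ)
    with hp
  set γ : ℝ → (Fin n → ℝ) × (Fin n → ℝ) := fun t => (y t, p t) with hγ
  -- smoothness of the curve
  have hjacC : ∀ (j : Fin k) (i : Fin n), ContDiffAt ℝ 1 (fun t => jac d (y t) j i) 0 :=
    fun j i => ContDiffAt.comp (x := (0:ℝ)) (g := fun z => jac d z j i) (f := y)
      (by rw [hy0]; exact (jac_entry_contDiffOn hU hd j i).contDiffAt (hU.mem_nhds hx0U)) hyC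
  have hpC : ContDiffAt ℝ 1 p 0 := by
    apply ContDiffAt.add
    · exact ContDiffAt.comp (x := (0:ℝ)) (g := grad H) (f := y)
        (by rw [hy0]; exact (grad_contDiffOn hU hH).contDiffAt (hU.mem_nhds hx0U)) hyC
    · rw [contDiffAt_pi]
      intro i
      have : (fun t => ((jac d (y t))ᵀ *ᵥ (lam0 + t • μ)) i)
          = fun t => ∑ j, jac d (y t) j i * (lam0 j + t * μ j) := by
        funext t
        simp [Matrix.mulVec, dotProduct, Matrix.transpose_apply]
      rw [this]
      apply ContDiffAt.sum
      intro j _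
      exact (hjacC j i).mul
        (contDiffAt_const.add (contDiffAt_id.mul contDiffAt_const))
  have hγC : ContDiffAt ℝ 1 γ 0 := hyC.prodMk hpC
  -- the derivative of the momentum curve
  have hpev : p =ᶠ[nhds 0] fun t => grad K (y t) + (jac d (y t))ᵀ *ᵥ (t • μ) := by
    filter_upwards [hevU] with t ht
    rw [hp]
    simp only
    rw [grad_add_dot hU hH hd lam0 ht, Matrix.mulVec_add, add_assoc]
  have hpart1 : HasDerivAt (fun t => grad K (y t)) (fderiv ℝ (grad K) x0 u) 0 := by
    have h' : HasFDerivAt (grad K) (fderiv ℝ (grad K) x0) (y 0) :=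
      hy0.symm ▸ hgradK_diff.hasFDerivAt
    exact h'.comp_hasDerivAt 0 hydu
  have hpart2 : HasDerivAt (fun t => (jac d (y t))ᵀ *ᵥ (t • μ)) (Dᵀ *ᵥ μ) 0 := by
    rw [hasDerivAt_pi]
    intro i
    have hterm : ∀ j : Fin k, HasDerivAt (fun t => jac d (y t) j i * (t * μ j))
        (D j i * μ j) 0 := by
      intro j
      have he : HasDerivAt (fun t => jac d (y t) j i)
          (deriv (fun t => jac d (y t) j i) 0) 0 :=
        ((hjacC j i).differentiableAt one_ne_zero).hasDerivAt
      have hg : HasDerivAt (fun t : ℝ => t * μ j) (μ j) 0 := by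
        simpa using (hasDerivAt_id (0:ℝ)).mul_const (μ j)
      have := he.fun_mul hg
      rw [hy0] at this
      rw [hD]
      simpa using this
    have hsum := HasDerivAt.fun_sum (u := Finset.univ) (fun j (_ : j ∈ Finset.univ) => hterm j)
    have hfun : (fun t => ((jac d (y t))ᵀ *ᵥ (t • μ)) i)
        = fun t => ∑ j, jac d (y t) j i * (t * μ j) := by
      funext t
      simp [Matrix.mulVec, dotProduct, Matrix.transpose_apply]
    rw [hfun]
    convert hsum using 1
    simp [Matrix.mulVec, dotProduct, Matrix.transpose_apply]
  have hpd : HasDerivAt p (fderiv ℝ (grad K) x0 u + Dᵀ *ᵥ μ) 0 :=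
    (hpart1.add hpart2).congr_of_eventuallyEq hpev
  have hγd : HasDerivAt γ (u, fderiv ℝ (grad K) x0 u + Dᵀ *ᵥ μ) 0 := hydu.prodMk hpd
  -- choose a small interval
  obtain ⟨s, hs, hsC⟩ := hγC.contDiffOn le_rfl (by simp)
  have hmem : {t : ℝ | d (y t) = 0 ∧ y t ∈ U} ∩ s ∈ nhds (0:ℝ) :=
    Filter.inter_mem (Filter.inter_mem hevd hevU) hs
  obtain ⟨ε, hε, hball⟩ := Metric.mem_nhds_iff.mp hmem
  have hIoo : Set.Ioo (-ε) ε ⊆ {t : ℝ | d (y t) = 0 ∧ y t ∈ U} ∩ s := by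
    intro t ht
    apply hball
    rw [Metric.mem_ball, Real.dist_eq, sub_zero, abs_lt]
    exact ⟨ht.1, ht.2⟩
  apply mem_tangentSet_of_small hε γ
  · exact (hsC.mono (fun t ht => (hIoo ht).2))
  · intro t ht
    refine ⟨y t, lam0 + t • μ, (hIoo ht).1.2, (hIoo ht).1.1, rfl⟩
  · have hp0 : p 0 = grad H x0 + (jac d x0)ᵀ *ᵥ lam0 := by
      show grad H (y 0) + (jac d (y 0))ᵀ *ᵥ (lam0 + (0:ℝ) • μ) = _
      rw [hy0]
      simp
    show (y 0, p 0) = _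
    rw [hy0, hp0]
  · exact hγd


lemma step1 {n k : ℕ} {U : Set (Fin n → ℝ)} (hU : IsOpen U)
    {H : (Fin n → ℝ) → ℝ} {d : (Fin n → ℝ) → (Fin k → ℝ)}
    (hH : ContDiffOn ℝ 2 H U) (hd : ContDiffOn ℝ 2 d U)
    (hrank : ∀ x ∈ U, (jac d x).rank = k)
    {x0 : Fin n → ℝ} (hx0U : x0 ∈ U) (lam0 : Fin k → ℝ)
    {v : (Fin n → ℝ) × (Fin n → ℝ)}
    (hv : v ∈ TangentSet
        {p | ∃ x lam, x ∈ U ∧ d x = 0 ∧ p = (x, grad H x + (jac d x)ᵀ *ᵥ lam)}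
        (x0, grad H x0 + (jac d x0)ᵀ *ᵥ lam0)) :
    ∃ u μ, jac d x0 *ᵥ u = 0 ∧
      v = (u, fderiv ℝ (grad (fun z => H z + lam0 ⬝ᵥ d z)) x0 u + (jac d x0)ᵀ *ᵥ μ) := by
  classical
  obtain ⟨γ, hγC, hγS, hγ0, hγd⟩ := hv
  set D := jac d x0 with hD
  have hIoo : Set.Ioo (-1:ℝ) 1 ∈ nhds (0:ℝ) := Ioo_mem_nhds (by norm_num) (by norm_num)
  have hγCA : ContDiffAt ℝ 1 γ 0 := hγC.contDiffAt hIoo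
  have hvd : deriv γ 0 = v := by rwa [derivWithin_of_isOpen isOpen_Ioo (by norm_num)] at hγd
  have hγv : HasDerivAt γ v 0 := hvd ▸ (hγCA.differentiableAt one_ne_zero).hasDerivAt
  set x : ℝ → (Fin n → ℝ) := fun t => (γ t).1 with hx
  set p : ℝ → (Fin n → ℝ) := fun t => (γ t).2 with hp
  have hxd : HasDerivAt x v.1 0 :=
    (ContinuousLinearMap.fst ℝ (Fin n → ℝ) (Fin n → ℝ)).hasFDerivAt.comp_hasDerivAt 0 hγv
  have hpd0 : HasDerivAt p v.2 0 :=
    (ContinuousLinearMap.snd ℝ (Fin n → ℝ) (Fin n → ℝ)).hasFDerivAt.comp_hasDerivAt 0 hγv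
  have hx0 : x 0 = x0 := congrArg Prod.fst hγ0
  have hp0 : p 0 = grad H x0 + Dᵀ *ᵥ lam0 := congrArg Prod.snd hγ0
  have hxC : ContDiffAt ℝ 1 x 0 :=
    ContDiffAt.comp (x := (0:ℝ)) (g := Prod.fst) (f := γ) contDiffAt_fst hγCA
  have hpC : ContDiffAt ℝ 1 p 0 :=
    ContDiffAt.comp (x := (0:ℝ)) (g := Prod.snd) (f := γ) contDiffAt_snd hγCA
  -- eventual structure of the curve
  have hevS : ∀ᶠ t in nhds (0:ℝ), x t ∈ U ∧ d (x t) = 0 ∧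
      ∃ lam, p t = grad H (x t) + (jac d (x t))ᵀ *ᵥ lam := by
    filter_upwards [hIoo] with t ht
    obtain ⟨xt, lamt, hxtU, hdxt, hγt⟩ := hγS t ht
    have h1 : x t = xt := by rw [hx]; simp only; rw [hγt]
    have h2 : p t = grad H xt + (jac d xt)ᵀ *ᵥ lamt := by rw [hp]; simp only; rw [hγt]
    subst h1
    exact ⟨hxtU, hdxt, lamt, h2⟩
  -- the multiplier recovered as a smooth function of t
  set Gm : (Fin n → ℝ) → Matrix (Fin k) (Fin k) ℝ := fun z => jac d z * (jac d z)ᵀ with hGm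
  set l : ℝ → (Fin k → ℝ) :=
    fun t => (Gm (x t))⁻¹ *ᵥ (jac d (x t) *ᵥ (p t - grad H (x t))) with hl
  have hkey : ∀ z ∈ U, ∀ lam : Fin k → ℝ, ∀ q : Fin n → ℝ,
      q = grad H z + (jac d z)ᵀ *ᵥ lam →
      (Gm z)⁻¹ *ᵥ (jac d z *ᵥ (q - grad H z)) = lam := by
    intro z hz lam q hq
    have hdet : IsUnit (jac d z * (jac d z)ᵀ).det :=
      det_mul_transpose_isUnit (jac d z) (hrank z hz)
    have hGz : Gm z = jac d z * (jac d z)ᵀ := rfl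
    rw [hq, add_sub_cancel_left, Matrix.mulVec_mulVec, Matrix.mulVec_mulVec, hGz,
      Matrix.mul_assoc, Matrix.nonsing_inv_mul _ hdet, Matrix.one_mulVec]
  have hl0 : l 0 = lam0 := by
    rw [hl]
    simp only
    rw [hx0]
    exact hkey x0 hx0U lam0 (p 0) hp0
  have hevpl : ∀ᶠ t in nhds (0:ℝ),
      p t = grad H (x t) + (jac d (x t))ᵀ *ᵥ l t := by
    filter_upwards [hevS] with t ⟨htU, _, lam, hlam⟩
    rw [hl]
    simp only
    rw [hkey (x t) htU lam (p t) hlam]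
    exact hlam
  -- smoothness of the multiplier curve
  have hjacC : ∀ (j : Fin k) (i : Fin n), ContDiffAt ℝ 1 (fun t => jac d (x t) j i) 0 :=
    fun j i => ContDiffAt.comp (x := (0:ℝ)) (g := fun z => jac d z j i) (f := x)
      (by rw [hx0]; exact (jac_entry_contDiffOn hU hd j i).contDiffAt (hU.mem_nhds hx0U)) hxC
  have hgHC : ContDiffAt ℝ 1 (fun t => grad H (x t)) 0 :=
    ContDiffAt.comp (x := (0:ℝ)) (g := grad H) (f := x)
      (by rw [hx0]; exact (grad_contDiffOn hU hH).contDiffAt (hU.mem_nhds hx0U)) hxC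
  have hGmC : ∀ a b : Fin k, ContDiffAt ℝ 1 (fun t => Gm (x t) a b) 0 := by
    intro a b
    have : (fun t => Gm (x t) a b) = fun t => ∑ i, jac d (x t) a i * jac d (x t) b i := by
      funext t
      simp [hGm, Matrix.mul_apply, Matrix.transpose_apply]
    rw [this]
    exact ContDiffAt.sum fun i _ => (hjacC a i).mul (hjacC b i)
  have hdet0 : (Gm (x 0)).det ≠ 0 := by
    rw [hx0]
    exact (det_mul_transpose_isUnit (jac d x0) (hrank x0 hx0U)).ne_zero
  have hlC : ContDiffAt ℝ 1 l 0 := by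
    rw [contDiffAt_pi]
    intro j
    have hrepr : (fun t => l t j) = fun t =>
        ∑ b, (Gm (x t))⁻¹ j b * ∑ i, jac d (x t) b i * (p t i - grad H (x t) i) := by
      funext t
      rw [hl]
      simp [Matrix.mulVec, dotProduct]
    rw [hrepr]
    apply ContDiffAt.sum
    intro b _
    apply ContDiffAt.mul
    · exact contDiffAt_inv_entry hGmC hdet0 j b
    · apply ContDiffAt.sum
      intro i _
      apply (hjacC b i).mul
      apply ContDiffAt.sub
      · exact (contDiffAt_pi.mp hpC) i
      · exact (contDiffAt_pi.mp hgHC) i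
  have hld : HasDerivAt l (deriv l 0) 0 := (hlC.differentiableAt one_ne_zero).hasDerivAt
  -- kernel property of the velocity
  have hdd : DifferentiableAt ℝ d x0 :=
    (hd.contDiffAt (hU.mem_nhds hx0U)).differentiableAt two_ne_zero
  have hDv1 : D *ᵥ v.1 = 0 := by
    have hcomp : HasDerivAt (fun t => d (x t)) (fderiv ℝ d x0 v.1) 0 := by
      have hdd' : HasFDerivAt d (fderiv ℝ d x0) (x 0) := hx0.symm ▸ hdd.hasFDerivAt
      exact hdd'.comp_hasDerivAt 0 hxd
    have hzero : HasDerivAt (fun t => d (x t)) 0 0 := by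
      have hconst : HasDerivAt (fun _ : ℝ => (0 : Fin k → ℝ)) 0 0 := hasDerivAt_const 0 0
      apply hconst.congr_of_eventuallyEq
      filter_upwards [hevS] with t ht using ht.2.1
    have := hzero.unique hcomp
    rw [← mulVec_jac, ← hD] at this
    exact this.symm
  -- the derivative of the momentum component
  set K : (Fin n → ℝ) → ℝ := fun z => H z + lam0 ⬝ᵥ d z with hK
  have hKC2 : ContDiffOn ℝ 2 K U := by
    apply hH.add
    have hcq : (fun z => lam0 ⬝ᵥ d z) = fun z =>
        (∑ j, lam0 j • (ContinuousLinearMap.proj j : (Fin k → ℝ) →L[ℝ] ℝ)) (d z) := by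
      funext z
      simp [dotProduct, ContinuousLinearMap.sum_apply]
    rw [hcq]
    exact (∑ j, lam0 j •
      (ContinuousLinearMap.proj j : (Fin k → ℝ) →L[ℝ] ℝ)).contDiff.comp_contDiffOn hd
  have hgradK_diff : DifferentiableAt ℝ (grad K) x0 :=
    ((grad_contDiffOn hU hKC2).contDiffAt (hU.mem_nhds hx0U)).differentiableAt one_ne_zero
  have hevU : ∀ᶠ t in nhds (0:ℝ), x t ∈ U := by
    filter_upwards [hevS] with t ht using ht.1
  have hpev : p =ᶠ[nhds 0] fun t => grad K (x t) + (jac d (x t))ᵀ *ᵥ (l t - lam0) := by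
    filter_upwards [hevpl, hevU] with t hpl htU
    rw [hpl, grad_add_dot hU hH hd lam0 htU, Matrix.mulVec_sub]
    abel
  have hpart1 : HasDerivAt (fun t => grad K (x t)) (fderiv ℝ (grad K) x0 v.1) 0 := by
    have h' : HasFDerivAt (grad K) (fderiv ℝ (grad K) x0) (x 0) :=
      hx0.symm ▸ hgradK_diff.hasFDerivAt
    exact h'.comp_hasDerivAt 0 hxd
  have hpart2 : HasDerivAt (fun t => (jac d (x t))ᵀ *ᵥ (l t - lam0)) (Dᵀ *ᵥ deriv l 0) 0 := by
    rw [hasDerivAt_pi]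
    intro i
    have hterm : ∀ j : Fin k, HasDerivAt (fun t => jac d (x t) j i * (l t j - lam0 j))
        (D j i * deriv l 0 j) 0 := by
      intro j
      have he : HasDerivAt (fun t => jac d (x t) j i)
          (deriv (fun t => jac d (x t) j i) 0) 0 :=
        ((hjacC j i).differentiableAt one_ne_zero).hasDerivAt
      have hr : HasDerivAt (fun t => l t j - lam0 j) (deriv l 0 j) 0 :=
        ((hasDerivAt_pi.mp hld) j).sub_const (lam0 j)
      have := he.fun_mul hr
      rw [hx0] at this
      rw [hD]
      have hl0j : l 0 j - lam0 j = 0 := by rw [hl0]; ring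
      rw [hl0j] at this
      simpa using this
    have hsum := HasDerivAt.fun_sum (u := Finset.univ) (fun j (_ : j ∈ Finset.univ) => hterm j)
    have hfun : (fun t => ((jac d (x t))ᵀ *ᵥ (l t - lam0)) i)
        = fun t => ∑ j, jac d (x t) j i * (l t j - lam0 j) := by
      funext t
      simp [Matrix.mulVec, dotProduct, Matrix.transpose_apply]
    rw [hfun]
    convert hsum using 1
    simp [Matrix.mulVec, dotProduct, Matrix.transpose_apply]
  have hpd : HasDerivAt p (fderiv ℝ (grad K) x0 v.1 + Dᵀ *ᵥ deriv l 0) 0 :=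
    (hpart1.add hpart2).congr_of_eventuallyEq hpev
  have hv2 : v.2 = fderiv ℝ (grad K) x0 v.1 + Dᵀ *ᵥ deriv l 0 := hpd0.unique hpd
  exact ⟨v.1, deriv l 0, hDv1, Prod.ext rfl hv2⟩

/-- The constrained set `L = {(x, ∇H(x) + d'(x)ᵀλ) : x ∈ U, d(x) = 0, λ ∈ ℝ^k}` is a
Lagrangian submanifold of `ℝ^n × ℝ^n`: a vector lies in the tangent space `T_z L` if and
only if it is symplectically orthogonal to all of `T_z L`. -/
theorem constrained_lagrangian_submanifold {n k : ℕ}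
    (U : Set (Fin n → ℝ)) (hU : IsOpen U)
    (H : (Fin n → ℝ) → ℝ) (d : (Fin n → ℝ) → (Fin k → ℝ))
    (hH : ContDiffOn ℝ 2 H U) (hd : ContDiffOn ℝ 2 d U)
    (hrank : ∀ x ∈ U, (jac d x).rank = k)
    (hne : ∃ x ∈ U, d x = 0)
    (L : Set ((Fin n → ℝ) × (Fin n → ℝ)))
    (hL : L = {p | ∃ (x : Fin n → ℝ) (lam : Fin k → ℝ),
      x ∈ U ∧ d x = 0 ∧ p = (x, grad H x + (jac d x)ᵀ *ᵥ lam)}) :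
    ∀ z ∈ L, ∀ v : (Fin n → ℝ) × (Fin n → ℝ),
      v ∈ TangentSet L z ↔
        ∀ w ∈ TangentSet L z, v.1 ⬝ᵥ w.2 - w.1 ⬝ᵥ v.2 = 0 := by
  subst hL
  intro z hz v
  obtain ⟨x0, lam0, hx0U, hdx0, hzeq⟩ := hz
  subst hzeq
  set D := jac d x0 with hD
  set K : (Fin n → ℝ) → ℝ := fun y => H y + lam0 ⬝ᵥ d y with hK
  have hKC2 : ContDiffOn ℝ 2 K U := by
    apply hH.add
    have hcq : (fun y => lam0 ⬝ᵥ d y) = fun y =>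
        (∑ j, lam0 j • (ContinuousLinearMap.proj j : (Fin k → ℝ) →L[ℝ] ℝ)) (d y) := by
      funext y
      simp [dotProduct, ContinuousLinearMap.sum_apply]
    rw [hcq]
    exact (∑ j, lam0 j •
      (ContinuousLinearMap.proj j : (Fin k → ℝ) →L[ℝ] ℝ)).contDiff.comp_contDiffOn hd
  have hsymm : ∀ a b, a ⬝ᵥ fderiv ℝ (grad K) x0 b = b ⬝ᵥ fderiv ℝ (grad K) x0 a :=
    grad_fderiv_symm hU hKC2 hx0U
  constructor
  · intro hvT w hwT
    obtain ⟨uv, μv, huv, hveq⟩ := step1 hU hH hd hrank hx0U lam0 hvT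
    obtain ⟨uw, μw, huw, hweq⟩ := step1 hU hH hd hrank hx0U lam0 hwT
    rw [hveq, hweq]
    simp only
    have e1 : uv ⬝ᵥ (Dᵀ *ᵥ μw) = 0 := by
      rw [Matrix.dotProduct_mulVec, Matrix.vecMul_transpose, huv]
      simp
    have e2 : uw ⬝ᵥ (Dᵀ *ᵥ μv) = 0 := by
      rw [Matrix.dotProduct_mulVec, Matrix.vecMul_transpose, huw]
      simp
    rw [dotProduct_add, dotProduct_add, e1, e2, hsymm uv uw]
    ring
  · intro hperp
    have hW : ∀ (u' : Fin n → ℝ) (μ' : Fin k → ℝ), D *ᵥ u' = 0 →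
        v.1 ⬝ᵥ (fderiv ℝ (grad K) x0 u' + Dᵀ *ᵥ μ') - u' ⬝ᵥ v.2 = 0 := by
      intro u' μ' hu'
      exact hperp _ (step2 hU hH hd hrank hx0U hdx0 lam0 u' μ' hu')
    have hDv1 : D *ᵥ v.1 = 0 := by
      have h0 : ∀ μ' : Fin k → ℝ, v.1 ⬝ᵥ (Dᵀ *ᵥ μ') = 0 := by
        intro μ'
        have := hW 0 μ' (by simp)
        simpa using this
      have := h0 (D *ᵥ v.1)
      rw [Matrix.dotProduct_mulVec, Matrix.vecMul_transpose] at this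
      exact dotProduct_self_eq_zero.mp this
    set r : Fin n → ℝ := v.2 - fderiv ℝ (grad K) x0 v.1 with hr
    have hrperp : ∀ u', D *ᵥ u' = 0 → u' ⬝ᵥ r = 0 := by
      intro u' hu'
      have h1 := hW u' 0 hu'
      rw [Matrix.mulVec_zero, add_zero] at h1
      rw [hr, dotProduct_sub]
      have hsym := hsymm v.1 u'
      linarith [h1, hsym]
    obtain ⟨μ, hμ⟩ := exists_mem_range_transpose D (hrank x0 hx0U) r hrperp
    have hv2 : v.2 = fderiv ℝ (grad K) x0 v.1 + Dᵀ *ᵥ μ := by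
      rw [← hμ, hr]
      abel
    have := step2 hU hH hd hrank hx0U hdx0 lam0 v.1 μ hDv1
    have hveq : v = (v.1, fderiv ℝ (grad K) x0 v.1 + Dᵀ *ᵥ μ) := Prod.ext rfl hv2
    rw [← hveq] at this
    exact this
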